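/- For x* ∈ ℝ consider the equilibrium K₇(x*) = (x*, 1 − x*, 0). If x* > (b − 1)/β, then (since ε < 1) the nonzero roots of charpoly(J(K₇(x*))) are ε − 1 < 0 and b − 1 − βx* < 0, i.e. J(K₇(x*)) has one zero eigenvalue and two negative real eigenvalues; whereas if x* < (b − 1)/β then J(K₇(x*)) has the positive real eigenvalue b − 1 − βx*, so K₇(x*) is linearly unstable. -/

import Mathlib

noncomputable section

open Polynomial

/-- Payoff of altruistic punishers. -/
def PiAP (γ x y z : ℝ) : ℝ := x + y - γ * z

/-- Payoff of non-punishing cooperators. -/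
def PiNC (x y : ℝ) : ℝ := x + y

/-- Payoff of defectors. -/
def PiD (b β x y : ℝ) : ℝ := (b - β) * x + b * y

/-- First component of the reduced replicator vector field. -/
def fRep (b β γ ε x y z : ℝ) : ℝ :=
  x * ((1 - x) * (PiAP γ x y z - ε) - y * (PiNC x y - ε) - z * (PiD b β x y - ε))

/-- Second component of the reduced replicator vector field. -/
def gRep (b β γ ε x y z : ℝ) : ℝ :=
  y * ((1 - y) * (PiNC x y - ε) - x * (PiAP γ x y z - ε) - z * (PiD b β x y - ε))

/-- Third component of the reduced replicator vector field. -/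
def hRep (b β γ ε x y z : ℝ) : ℝ :=
  z * ((1 - z) * (PiD b β x y - ε) - y * (PiNC x y - ε) - x * (PiAP γ x y z - ε))

/-- The reduced replicator vector field `F : ℝ³ → ℝ³`. -/
def Fv (b β γ ε : ℝ) (p : ℝ × ℝ × ℝ) : ℝ × ℝ × ℝ :=
  (fRep b β γ ε p.1 p.2.1 p.2.2,
   gRep b β γ ε p.1 p.2.1 p.2.2,
   hRep b β γ ε p.1 p.2.1 p.2.2)

/-- Partial derivative in the first variable. -/
def pd1 (F : ℝ → ℝ → ℝ → ℝ) (p : ℝ × ℝ × ℝ) : ℝ :=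
  deriv (fun x => F x p.2.1 p.2.2) p.1

/-- Partial derivative in the second variable. -/
def pd2 (F : ℝ → ℝ → ℝ → ℝ) (p : ℝ × ℝ × ℝ) : ℝ :=
  deriv (fun y => F p.1 y p.2.2) p.2.1

/-- Partial derivative in the third variable. -/
def pd3 (F : ℝ → ℝ → ℝ → ℝ) (p : ℝ × ℝ × ℝ) : ℝ :=
  deriv (fun z => F p.1 p.2.1 z) p.2.2

/-- The Jacobian matrix of the reduced replicator vector field at `p`. -/
def Jac (b β γ ε : ℝ) (p : ℝ × ℝ × ℝ) : Matrix (Fin 3) (Fin 3) ℝ :=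
  !![pd1 (fRep b β γ ε) p, pd2 (fRep b β γ ε) p, pd3 (fRep b β γ ε) p;
     pd1 (gRep b β γ ε) p, pd2 (gRep b β γ ε) p, pd3 (gRep b β γ ε) p;
     pd1 (hRep b β γ ε) p, pd2 (hRep b β γ ε) p, pd3 (hRep b β γ ε) p]

lemma deriv_cubic (a₀ a₁ a₂ a₃ t : ℝ) :
    deriv (fun s : ℝ => a₀ + a₁ * s + a₂ * s ^ 2 + a₃ * s ^ 3) t
      = a₁ + 2 * a₂ * t + 3 * a₃ * t ^ 2 := by
  have h : HasDerivAt (fun s : ℝ => a₀ + a₁ * s + a₂ * s ^ 2 + a₃ * s ^ 3)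
      (a₁ + 2 * a₂ * t + 3 * a₃ * t ^ 2) t := by
    have h1 : HasDerivAt (fun s : ℝ => s) 1 t := hasDerivAt_id t
    have h2 := hasDerivAt_pow 2 t
    have h3 := hasDerivAt_pow 3 t
    have := (((hasDerivAt_const t a₀).add (h1.const_mul a₁)).add
      ((h2.const_mul a₂))).add (h3.const_mul a₃)
    refine this.congr_deriv ?_
    push_cast
    ring
  exact h.deriv


/-- stability analysis of `K₇(x*) = (x*, 1 - x*, 0)` in terms of
the sign of `b - 1 - β x*`. -/
theorem K7_eigenvalue_signs (b β γ ε : ℝ)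
    (hb : 1 < b) (hβ : 0 < β) (hγ : 0 < γ) (hε : ε < 1) (xs : ℝ) :
    ((b - 1) / β < xs →
      ε - 1 < 0 ∧ b - 1 - β * xs < 0 ∧
      ∀ μ : ℝ, ((Jac b β γ ε (xs, 1 - xs, 0)).charpoly).IsRoot μ →
        μ = 0 ∨ μ = ε - 1 ∨ μ = b - 1 - β * xs) ∧
    (xs < (b - 1) / β →
      0 < b - 1 - β * xs ∧
      ((Jac b β γ ε (xs, 1 - xs, 0)).charpoly).IsRoot (b - 1 - β * xs)) := by
  have e11 : pd1 (fRep b β γ ε) (xs, 1 - xs, 0) = (ε - 1) * xs := by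
    show deriv (fun s => fRep b β γ ε s (1 - xs) 0) xs = _
    rw [show (fun s => fRep b β γ ε s (1 - xs) 0)
        = fun s : ℝ => (0 : ℝ) + (xs - xs ^ 2 - ε * xs) * s + (-1 + 2 * xs + ε) * s ^ 2
          + (-1) * s ^ 3 from funext fun s => by simp [fRep, PiAP, PiNC, PiD]; ring,
      deriv_cubic]
    ring
  have e12 : pd2 (fRep b β γ ε) (xs, 1 - xs, 0) = (ε - 1) * xs := by
    show deriv (fun s => fRep b β γ ε xs s 0) (1 - xs) = _
    rw [show (fun s => fRep b β γ ε xs s 0)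
        = fun s : ℝ => (xs ^ 2 - xs ^ 3 - ε * xs + ε * xs ^ 2)
          + (xs - 2 * xs ^ 2 + ε * xs) * s + (-xs) * s ^ 2
          + (0 : ℝ) * s ^ 3 from funext fun s => by simp [fRep, PiAP, PiNC, PiD]; ring,
      deriv_cubic]
    ring
  have e13 : pd3 (fRep b β γ ε) (xs, 1 - xs, 0)
      = xs * (ε - γ + γ * xs + β * xs - b) := by
    show deriv (fun s => fRep b β γ ε xs (1 - xs) s) 0 = _
    rw [show (fun s => fRep b β γ ε xs (1 - xs) s)
        = fun s : ℝ => (0 : ℝ) + (xs * (ε - γ + γ * xs + β * xs - b)) * s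
          + (0 : ℝ) * s ^ 2 + (0 : ℝ) * s ^ 3 from
          funext fun s => by simp [fRep, PiAP, PiNC, PiD]; ring,
      deriv_cubic]
    ring
  have e21 : pd1 (gRep b β γ ε) (xs, 1 - xs, 0) = (ε - 1) * (1 - xs) := by
    show deriv (fun s => gRep b β γ ε s (1 - xs) 0) xs = _
    rw [show (fun s => gRep b β γ ε s (1 - xs) 0)
        = fun s : ℝ => (xs - 2 * xs ^ 2 + xs ^ 3 - ε * xs + ε * xs ^ 2)
          + (-1 + 3 * xs - 2 * xs ^ 2 + ε - ε * xs) * s + (-1 + xs) * s ^ 2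
          + (0 : ℝ) * s ^ 3 from funext fun s => by simp [gRep, PiAP, PiNC, PiD]; ring,
      deriv_cubic]
    ring
  have e22 : pd2 (gRep b β γ ε) (xs, 1 - xs, 0) = (ε - 1) * (1 - xs) := by
    show deriv (fun s => gRep b β γ ε xs s 0) (1 - xs) = _
    rw [show (fun s => gRep b β γ ε xs s 0)
        = fun s : ℝ => (0 : ℝ) + (xs - xs ^ 2 - ε + ε * xs) * s
          + (1 - 2 * xs + ε) * s ^ 2
          + (-1) * s ^ 3 from funext fun s => by simp [gRep, PiAP, PiNC, PiD]; ring,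
      deriv_cubic]
    ring
  have e23 : pd3 (gRep b β γ ε) (xs, 1 - xs, 0)
      = (1 - xs) * (ε + γ * xs + β * xs - b) := by
    show deriv (fun s => gRep b β γ ε xs (1 - xs) s) 0 = _
    rw [show (fun s => gRep b β γ ε xs (1 - xs) s)
        = fun s : ℝ => (0 : ℝ) + ((1 - xs) * (ε + γ * xs + β * xs - b)) * s
          + (0 : ℝ) * s ^ 2 + (0 : ℝ) * s ^ 3 from
          funext fun s => by simp [gRep, PiAP, PiNC, PiD]; ring,
      deriv_cubic]
    ring
  have e31 : pd1 (hRep b β γ ε) (xs, 1 - xs, 0) = 0 := by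
    show deriv (fun s => hRep b β γ ε s (1 - xs) 0) xs = _
    rw [show (fun s => hRep b β γ ε s (1 - xs) 0)
        = fun s : ℝ => (0 : ℝ) + (0 : ℝ) * s + (0 : ℝ) * s ^ 2 + (0 : ℝ) * s ^ 3 from
          funext fun s => by simp [hRep, PiAP, PiNC, PiD],
      deriv_cubic]
    ring
  have e32 : pd2 (hRep b β γ ε) (xs, 1 - xs, 0) = 0 := by
    show deriv (fun s => hRep b β γ ε xs s 0) (1 - xs) = _
    rw [show (fun s => hRep b β γ ε xs s 0)
        = fun s : ℝ => (0 : ℝ) + (0 : ℝ) * s + (0 : ℝ) * s ^ 2 + (0 : ℝ) * s ^ 3 from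
          funext fun s => by simp [hRep, PiAP, PiNC, PiD],
      deriv_cubic]
    ring
  have e33 : pd3 (hRep b β γ ε) (xs, 1 - xs, 0) = b - 1 - β * xs := by
    show deriv (fun s => hRep b β γ ε xs (1 - xs) s) 0 = _
    rw [show (fun s => hRep b β γ ε xs (1 - xs) s)
        = fun s : ℝ => (0 : ℝ) + (b - 1 - β * xs) * s
          + (ε + γ * xs + β * xs - b) * s ^ 2 + (0 : ℝ) * s ^ 3 from
          funext fun s => by simp [hRep, PiAP, PiNC, PiD]; ring,
      deriv_cubic]
    ring
  have hJ : Jac b β γ ε (xs, 1 - xs, 0)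
      = !![(ε - 1) * xs, (ε - 1) * xs, xs * (ε - γ + γ * xs + β * xs - b);
           (ε - 1) * (1 - xs), (ε - 1) * (1 - xs), (1 - xs) * (ε + γ * xs + β * xs - b);
           0, 0, b - 1 - β * xs] := by
    rw [Jac, e11, e12, e13, e21, e22, e23, e31, e32, e33]
  have key : ∀ μ : ℝ, ((Jac b β γ ε (xs, 1 - xs, 0)).charpoly).eval μ
      = μ * (μ - (ε - 1)) * (μ - (b - 1 - β * xs)) := by
    intro μ
    rw [hJ, Matrix.charpoly, Matrix.det_fin_three]
    simp [Matrix.charmatrix_apply_eq, Matrix.charmatrix_apply_ne]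
    ring
  constructor
  · intro hx
    have hb1 : b - 1 < β * xs := by
      have := (div_lt_iff₀ hβ).mp hx
      linarith [this]
    refine ⟨by linarith, by linarith, fun μ hμ => ?_⟩
    have h0 : μ * (μ - (ε - 1)) * (μ - (b - 1 - β * xs)) = 0 := by
      rw [← key μ]; exact hμ
    rcases mul_eq_zero.mp h0 with h | h
    · rcases mul_eq_zero.mp h with h | h
      · exact Or.inl h
      · exact Or.inr (Or.inl (by linarith [sub_eq_zero.mp h]))
    · exact Or.inr (Or.inr (sub_eq_zero.mp h))
  · intro hx
    have hb1 : β * xs < b - 1 := by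
      have := (lt_div_iff₀ hβ).mp hx
      linarith [this]
    refine ⟨by linarith, ?_⟩
    show ((Jac b β γ ε (xs, 1 - xs, 0)).charpoly).eval (b - 1 - β * xs) = 0
    rw [key]
    ring
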